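/- Let X be an endomorphism of a finite-dimensional vector space V over an algebraically closed field F of characteristic zero with rank X < dim W for a subspace W ⊆ V. Then there exists g ∈ GL(V) such that rank(pr_W ∘ (gXg⁻¹)|_W) = rank X, where pr_W is the projection onto W along a fixed complement. -/

import Mathlib

open Module

section Aux

variable {F V : Type*} [Field F] [AddCommGroup V] [Module F V] [FiniteDimensional F V]

lemma aux_finrank_sup_span_singleton (U : Submodule F V) {v : V} (hv : v ∉ U) :
    finrank F ↥(U ⊔ Submodule.span F {v}) = finrank F ↥U + 1 := by
  have hv0 : v ≠ 0 := fun h => hv (h ▸ U.zero_mem)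
  have hinf : U ⊓ Submodule.span F {v} = ⊥ := by
    rw [eq_bot_iff]
    rintro x ⟨hxU, hxs⟩
    obtain ⟨c, rfl⟩ := Submodule.mem_span_singleton.1 hxs
    rcases eq_or_ne c 0 with rfl | hc
    · simp
    · exact absurd (by simpa [smul_smul, inv_mul_cancel₀ hc] using U.smul_mem c⁻¹ hxU) hv
  have h := Submodule.finrank_sup_add_finrank_inf_eq U (Submodule.span F {v})
  rw [hinf, finrank_bot, finrank_span_singleton hv0] at h
  omega

lemma aux_exists_not_mem {U : Submodule F V} (hU : U ≠ ⊤) : ∃ v, v ∉ U := by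
  by_contra h
  push_neg at h
  exact hU (Submodule.eq_top_iff'.2 h)

lemma aux_exists_not_mem_pair {U R : Submodule F V} (hU : U ≠ ⊤) (hR : R ≠ ⊤) :
    ∃ v, v ∉ U ∧ v ∉ R := by
  obtain ⟨a, ha⟩ := aux_exists_not_mem hU
  obtain ⟨b, hb⟩ := aux_exists_not_mem hR
  by_contra h
  push_neg at h
  have haR : a ∈ R := h a ha
  have hbU : b ∈ U := by
    by_contra hbU
    exact hb (h b hbU)
  have hUab : a + b ∉ U := fun hm => ha (by simpa using U.sub_mem hm hbU)
  have hRab : a + b ∈ R := h _ hUab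
  exact hb (by simpa using R.sub_mem hRab haR)

lemma aux_exists_superset_finrank (P : Submodule F V) :
    ∀ k, finrank F ↥P ≤ k → k ≤ finrank F V → ∃ U, P ≤ U ∧ finrank F ↥U = k := by
  intro k
  induction k with
  | zero =>
    intro h1 _
    exact ⟨P, le_rfl, Nat.le_zero.1 h1⟩
  | succ n ih =>
    intro h1 h2
    rcases eq_or_lt_of_le h1 with h | h
    · exact ⟨P, le_rfl, h⟩
    · obtain ⟨U, hPU, hUn⟩ := ih (Nat.lt_succ_iff.1 h) (by omega)
      have hUt : U ≠ ⊤ := by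
        intro ht
        rw [ht, finrank_top] at hUn
        omega
      obtain ⟨v, hv⟩ := aux_exists_not_mem hUt
      exact ⟨U ⊔ Submodule.span F {v}, hPU.trans le_sup_left,
        by rw [aux_finrank_sup_span_singleton U hv, hUn]⟩

lemma aux_exists_compl_avoid :
    ∀ (d : ℕ) (U R : Submodule F V), finrank F V - finrank F ↥U ≤ d →
      finrank F ↥R ≤ finrank F ↥U →
      ∃ U', IsCompl U U' ∧ U' ⊓ R = ⊥ := by
  intro d
  induction d with
  | zero =>
    intro U R h0 _
    have hle : finrank F V ≤ finrank F ↥U := by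
      have := U.finrank_le
      omega
    have hU : U = ⊤ := Submodule.eq_top_of_finrank_eq (le_antisymm U.finrank_le hle)
    exact ⟨⊥, hU ▸ isCompl_top_bot, bot_inf_eq R⟩
  | succ d ih =>
    intro U R hd hRU
    by_cases hU : U = ⊤
    · exact ⟨⊥, hU ▸ isCompl_top_bot, bot_inf_eq R⟩
    have hUlt : finrank F ↥U < finrank F V := by
      rcases lt_or_eq_of_le U.finrank_le with h | h
      · exact h
      · exact absurd (Submodule.eq_top_of_finrank_eq h) hU
    have hR : R ≠ ⊤ := by
      intro ht
      rw [ht, finrank_top] at hRU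
      omega
    obtain ⟨v, hvU, hvR⟩ := aux_exists_not_mem_pair hU hR
    have hv0 : v ≠ 0 := fun h => hvU (h ▸ U.zero_mem)
    set U1 := U ⊔ Submodule.span F {v} with hU1def
    set R1 := R ⊔ Submodule.span F {v} with hR1def
    have hU1 : finrank F ↥U1 = finrank F ↥U + 1 := aux_finrank_sup_span_singleton U hvU
    have hR1 : finrank F ↥R1 ≤ finrank F ↥R + 1 := by
      have h := Submodule.finrank_sup_add_finrank_inf_eq R (Submodule.span F {v})
      rw [finrank_span_singleton hv0, ← hR1def] at h
      omega
    obtain ⟨U'', hcompl, hinf⟩ := ih U1 R1 (by omega) (by omega)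
    refine ⟨U'' ⊔ Submodule.span F {v}, ⟨?_, ?_⟩, ?_⟩
    · rw [disjoint_iff, eq_bot_iff]
      rintro x ⟨hxU, hxs⟩
      obtain ⟨y, hy, z, hz, rfl⟩ := Submodule.mem_sup.1 hxs
      obtain ⟨c, rfl⟩ := Submodule.mem_span_singleton.1 hz
      have hyU1 : y ∈ U1 := by
        rw [(add_sub_cancel_right y (c • v)).symm]
        exact Submodule.sub_mem _ (le_sup_left (α := Submodule F V) hxU)
          (le_sup_right (α := Submodule F V) (Submodule.smul_mem _ c (Submodule.mem_span_singleton_self v)))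
      have hy0 : y = 0 := by
        have := hcompl.disjoint
        rw [disjoint_iff, eq_bot_iff] at this
        exact (Submodule.mem_bot F).1 (this ⟨hyU1, hy⟩)
      subst hy0
      rw [zero_add] at hxU ⊢
      rcases eq_or_ne c 0 with rfl | hc
      · simp
      · exact absurd (by simpa [smul_smul, inv_mul_cancel₀ hc] using U.smul_mem c⁻¹ hxU) hvU
    · rw [codisjoint_iff]
      have : U ⊔ (U'' ⊔ Submodule.span F {v}) = U1 ⊔ U'' := by
        rw [hU1def, sup_comm U'' _, ← sup_assoc]
      rw [this, ← codisjoint_iff]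
      exact hcompl.codisjoint
    · rw [eq_bot_iff]
      rintro x ⟨hxs, hxR⟩
      obtain ⟨y, hy, z, hz, rfl⟩ := Submodule.mem_sup.1 hxs
      obtain ⟨c, rfl⟩ := Submodule.mem_span_singleton.1 hz
      have hyR1 : y ∈ R1 := by
        rw [(add_sub_cancel_right y (c • v)).symm]
        exact Submodule.sub_mem _ (le_sup_left (α := Submodule F V) hxR)
          (le_sup_right (α := Submodule F V) (Submodule.smul_mem _ c (Submodule.mem_span_singleton_self v)))
      have hy0 : y = 0 := by
        rw [eq_bot_iff] at hinf
        exact (Submodule.mem_bot F).1 (hinf ⟨hy, hyR1⟩)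
      subst hy0
      rw [zero_add] at hxR ⊢
      rcases eq_or_ne c 0 with rfl | hc
      · simp
      · exact absurd (by simpa [smul_smul, inv_mul_cancel₀ hc] using R.smul_mem c⁻¹ hxR) hvR

end Aux

/-- If `rank X < dim W` for a subspace `W ⊆ V` with fixed complement `W'`, then some
conjugate `g X g⁻¹` of `X` satisfies `rank (pr_W ∘ (g X g⁻¹)|_W) = rank X`, where `pr_W`
is the projection onto `W` along `W'`. -/
theorem stmt_3 (F V : Type*) [Field F] [IsAlgClosed F] [CharZero F]
    [AddCommGroup V] [Module F V] [FiniteDimensional F V]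
    (W W' : Submodule F V) (hc : IsCompl W W')
    (X : V →ₗ[F] V) (hX : finrank F ↥(LinearMap.range X) < finrank F W) :
    ∃ g : V ≃ₗ[F] V,
      finrank F ↥(LinearMap.range
        ((W.linearProjOfIsCompl W' hc) ∘ₗ
          (g.toLinearMap ∘ₗ X ∘ₗ g.symm.toLinearMap) ∘ₗ W.subtype)) =
      finrank F ↥(LinearMap.range X) := by
  classical
  set R := LinearMap.range X with hRdef
  set K := LinearMap.ker X with hKdef
  obtain ⟨P, hPK⟩ := Submodule.exists_isCompl K
  have hrn : finrank F ↥R + finrank F ↥K = finrank F V :=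
    LinearMap.finrank_range_add_finrank_ker X
  have hKP : finrank F ↥K + finrank F ↥P = finrank F V :=
    Submodule.finrank_add_eq_of_isCompl hPK
  have hPfr : finrank F ↥P = finrank F ↥R := by omega
  obtain ⟨U, hPU, hUrank⟩ := aux_exists_superset_finrank P (finrank F ↥W)
    (by omega) W.finrank_le
  obtain ⟨U', hUU', hU'R⟩ := aux_exists_compl_avoid (finrank F V) U R
    (by omega) (by omega)
  have hUfr : finrank F ↥U = finrank F ↥W := hUrank
  have hU'fr : finrank F ↥U' = finrank F ↥W' := by
    have h1 := Submodule.finrank_add_eq_of_isCompl hUU'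
    have h2 := Submodule.finrank_add_eq_of_isCompl hc
    omega
  obtain ⟨eU⟩ := FiniteDimensional.nonempty_linearEquiv_of_finrank_eq hUfr
  obtain ⟨eU'⟩ := FiniteDimensional.nonempty_linearEquiv_of_finrank_eq hU'fr
  set g : V ≃ₗ[F] V :=
    (Submodule.prodEquivOfIsCompl U U' hUU').symm.trans
      ((eU.prodCongr eU').trans (Submodule.prodEquivOfIsCompl W W' hc)) with hgdef
  -- g maps U to W and U' to W'
  have hgU : ∀ u : V, u ∈ U → g u ∈ W := by
    intro u hu
    have h1 : (Submodule.prodEquivOfIsCompl U U' hUU').symm u = (⟨u, hu⟩, 0) :=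
      Submodule.prodEquivOfIsCompl_symm_apply_left U U' hUU' ⟨u, hu⟩
    have : g u = ↑(eU ⟨u, hu⟩) + ↑(eU' 0) := by
      rw [hgdef]
      simp only [LinearEquiv.trans_apply, h1, LinearEquiv.prodCongr_apply]
      rfl
    rw [this]
    simp only [map_zero, Submodule.coe_zero, add_zero]
    exact (eU ⟨u, hu⟩).2
  have hgU' : ∀ u : V, u ∈ U' → g u ∈ W' := by
    intro u hu
    have h1 : (Submodule.prodEquivOfIsCompl U U' hUU').symm u = (0, ⟨u, hu⟩) :=
      Submodule.prodEquivOfIsCompl_symm_apply_right U U' hUU' ⟨u, hu⟩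
    have : g u = ↑(eU 0) + ↑(eU' ⟨u, hu⟩) := by
      rw [hgdef]
      simp only [LinearEquiv.trans_apply, h1, LinearEquiv.prodCongr_apply]
      rfl
    rw [this]
    simp only [map_zero, Submodule.coe_zero, zero_add]
    exact (eU' ⟨u, hu⟩).2
  have hmapU : U.map (g : V →ₗ[F] V) = W := by
    apply Submodule.eq_of_le_of_finrank_eq
    · rintro x ⟨u, hu, rfl⟩
      exact hgU u hu
    · rw [LinearEquiv.finrank_map_eq g U, hUfr]
  have hmapU' : U'.map (g : V →ₗ[F] V) = W' := by
    apply Submodule.eq_of_le_of_finrank_eq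
    · rintro x ⟨u, hu, rfl⟩
      exact hgU' u hu
    · rw [LinearEquiv.finrank_map_eq g U', hU'fr]
  refine ⟨g, ?_⟩
  -- reduce range to an image of W
  have hWU : W.map (g.symm : V →ₗ[F] V) = U := by
    rw [← hmapU, ← Submodule.map_comp]
    have : (g.symm : V →ₗ[F] V) ∘ₗ (g : V →ₗ[F] V) = LinearMap.id := by
      ext x; simp
    rw [this, Submodule.map_id]
  have hUK : U ⊔ K = ⊤ := by
    rw [eq_top_iff, ← hPK.sup_eq_top]
    exact sup_le (le_sup_right) (hPU.trans le_sup_left)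
  have hXK : K.map X = ⊥ := by
    rw [eq_bot_iff]
    rintro x ⟨y, hy, rfl⟩
    simpa [hKdef] using hy
  have hXU : U.map X = R := by
    have h1 : U.map X ⊔ K.map X = (U ⊔ K).map X := (Submodule.map_sup U K X).symm
    rw [hXK, sup_bot_eq, hUK, Submodule.map_top] at h1
    exact h1
  have hrange : LinearMap.range
      ((W.linearProjOfIsCompl W' hc) ∘ₗ
        (g.toLinearMap ∘ₗ X ∘ₗ g.symm.toLinearMap) ∘ₗ W.subtype) =
      (R.map (g : V →ₗ[F] V)).map (W.linearProjOfIsCompl W' hc) := by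
    rw [LinearMap.range_comp, LinearMap.range_comp, Submodule.range_subtype]
    congr 1
    show W.map (g.toLinearMap ∘ₗ X ∘ₗ g.symm.toLinearMap) = R.map (g : V →ₗ[F] V)
    rw [Submodule.map_comp, Submodule.map_comp, hWU, hXU]
  rw [hrange]
  -- now show projection is injective on g(R)
  set S := R.map (g : V →ₗ[F] V) with hSdef
  have hSW' : S ⊓ W' = ⊥ := by
    rw [hSdef, ← hmapU', ← Submodule.map_inf (g : V →ₗ[F] V) g.injective, inf_comm R U', hU'R, Submodule.map_bot]
  have hmapS : S.map (W.linearProjOfIsCompl W' hc) =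
      LinearMap.range ((W.linearProjOfIsCompl W' hc) ∘ₗ S.subtype) := by
    rw [LinearMap.range_comp, Submodule.range_subtype]
  have hinj : Function.Injective ((W.linearProjOfIsCompl W' hc) ∘ₗ S.subtype) := by
    rw [← LinearMap.ker_eq_bot, eq_bot_iff]
    rintro ⟨x, hxS⟩ hx
    have hx' : W.linearProjOfIsCompl W' hc x = 0 := hx
    have hxW' : x ∈ W' := (Submodule.linearProjOfIsCompl_apply_eq_zero_iff hc).1 hx'
    have : x ∈ S ⊓ W' := ⟨hxS, hxW'⟩
    rw [hSW'] at this
    simpa using (Submodule.mem_bot F).1 this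
  rw [hmapS, LinearMap.finrank_range_of_inj hinj]
  exact LinearEquiv.finrank_map_eq g R
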